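/- The two-sided exponential (Laplace) distribution on ℝ with density ½ e^{-|x|} satisfies a Poincaré inequality with constant C = 4: for all smooth compactly supported f, Var_μ(f) ≤ 4 ∫ (f')² dμ. -/

import Mathlib

open MeasureTheory Real Set Filter Topology

lemma aux_int_Ioi {g : ℝ → ℝ} (hg : Continuous g) {C : ℝ} (hb : ∀ x, |g x| ≤ C) :
    IntegrableOn (fun x => g x * Real.exp (-x)) (Ioi (0:ℝ)) := by
  have h1 : IntegrableOn (fun x => C * Real.exp (-1*x)) (Ioi (0:ℝ)) :=
    (exp_neg_integrableOn_Ioi 0 one_pos).const_mul C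
  refine h1.mono' ((hg.mul (Real.continuous_exp.comp continuous_neg)).aestronglyMeasurable) ?_
  filter_upwards with x
  simp only [norm_mul, Real.norm_eq_abs, Real.abs_exp, neg_one_mul]
  exact mul_le_mul_of_nonneg_right (hb x) (Real.exp_pos _).le

lemma aux_int_w {g : ℝ → ℝ} (hg : Continuous g) {C : ℝ} (hb : ∀ x, |g x| ≤ C) :
    Integrable (fun x => g x * Real.exp (-|x|)) := by
  rw [← integrableOn_univ, ← Set.Iic_union_Ioi (a := (0:ℝ))]
  have hm : AEStronglyMeasurable (fun x => g x * Real.exp (-|x|)) volume :=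
    (hg.mul (Real.continuous_exp.comp continuous_abs.neg)).aestronglyMeasurable
  refine IntegrableOn.union ?_ ?_
  · refine ((integrableOn_exp_Iic 0).const_mul C).mono' hm.restrict ?_
    refine (ae_restrict_iff' measurableSet_Iic).2 (Filter.Eventually.of_forall fun x hx => ?_)
    have hax : |x| = -x := abs_of_nonpos hx
    simp only [norm_mul, Real.norm_eq_abs, Real.abs_exp, hax, neg_neg]
    exact mul_le_mul_of_nonneg_right (hb x) (Real.exp_pos _).le
  · refine ((exp_neg_integrableOn_Ioi 0 one_pos).const_mul C).mono' hm.restrict ?_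
    refine (ae_restrict_iff' measurableSet_Ioi).2 (Filter.Eventually.of_forall fun x hx => ?_)
    have hax : |x| = x := abs_of_pos hx
    simp only [norm_mul, Real.norm_eq_abs, Real.abs_exp, hax, neg_one_mul]
    exact mul_le_mul_of_nonneg_right (hb x) (Real.exp_pos _).le

lemma halfline (f : ℝ → ℝ) (hf : ContDiff ℝ (⊤ : ℕ∞) f) (hsupp : HasCompactSupport f) :
    ∫ x in Ioi (0:ℝ), (f x - f 0)^2 * Real.exp (-x) ≤
      4 * ∫ x in Ioi (0:ℝ), (deriv f x)^2 * Real.exp (-x) := by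
  obtain ⟨C, hC'⟩ := hsupp.exists_bound_of_continuous hf.continuous
  have hC : ∀ x, |f x| ≤ C := fun x => by simpa [Real.norm_eq_abs] using hC' x
  obtain ⟨D, hD'⟩ := (hsupp.deriv).exists_bound_of_continuous (hf.continuous_deriv (by simp))
  have hD : ∀ x, |deriv f x| ≤ D := fun x => by simpa [Real.norm_eq_abs] using hD' x
  have hD0 : 0 ≤ D := (abs_nonneg _).trans (hD 0)
  set g : ℝ → ℝ := fun x => f x - f 0 with hg
  set M : ℝ := C + |f 0| with hM
  have hM0 : 0 ≤ M := add_nonneg ((abs_nonneg _).trans (hC 0)) (abs_nonneg _)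
  have hgb : ∀ x, |g x| ≤ M := fun x => (abs_sub _ _).trans (add_le_add_left (hC x) _)
  have hgc : Continuous g := hf.continuous.sub continuous_const
  have hdc : Continuous (deriv f) := hf.continuous_deriv (by simp)
  -- derivative of F := g^2 * exp(-x)
  have hFd : ∀ x : ℝ, HasDerivAt (fun y => (g y)^2 * Real.exp (-y))
      ((2 * g x * deriv f x - (g x)^2) * Real.exp (-x)) x := by
    intro x
    have h1 : HasDerivAt g (deriv f x) x :=
      ((hf.differentiable (by simp) x).hasDerivAt).sub_const _
    have h2 := h1.fun_pow 2
    simp only [Nat.cast_ofNat, Nat.reduceSub, pow_one] at h2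
    have h3 : HasDerivAt (fun y : ℝ => Real.exp (-y)) (-Real.exp (-x)) x := by
      simpa using (hasDerivAt_neg x).exp
    have := h2.fun_mul h3
    exact this.congr_deriv (by ring)
  -- integrabilities on Ioi 0
  have habs_sq : ∀ (a b : ℝ), |a| ≤ b → |a^2| ≤ b^2 := fun a b h => by
    rw [abs_pow]; exact pow_le_pow_left₀ (abs_nonneg _) h 2
  have hint_g2 : IntegrableOn (fun x => (g x)^2 * Real.exp (-x)) (Ioi (0:ℝ)) :=
    aux_int_Ioi (hgc.pow 2) (C := M^2) (fun x => habs_sq _ _ (hgb x))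
  have hint_f2 : IntegrableOn (fun x => (deriv f x)^2 * Real.exp (-x)) (Ioi (0:ℝ)) :=
    aux_int_Ioi (hdc.pow 2) (C := D^2) (fun x => habs_sq _ _ (hD x))
  have hbgg' : ∀ x, |2 * g x * deriv f x| ≤ 2 * M * D := by
    intro x
    rw [abs_mul, abs_mul, abs_two]
    have h1 : 0 ≤ |g x| := abs_nonneg _
    have h2 : 0 ≤ |deriv f x| := abs_nonneg _
    nlinarith [hgb x, hD x]
  have hint_gg' : IntegrableOn (fun x => 2 * g x * deriv f x * Real.exp (-x)) (Ioi (0:ℝ)) :=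
    aux_int_Ioi ((continuous_const.mul hgc).mul hdc) (C := 2*M*D) hbgg'
  have hint_main : IntegrableOn
      (fun x => (2 * g x * deriv f x - (g x)^2) * Real.exp (-x)) (Ioi (0:ℝ)) := by
    refine aux_int_Ioi (((continuous_const.mul hgc).mul hdc).sub (hgc.pow 2))
      (C := 2*M*D + M^2) (fun x => ?_)
    rw [sub_eq_add_neg]
    refine (abs_add_le _ _).trans ?_
    rw [abs_neg]
    exact add_le_add (hbgg' x) (habs_sq _ _ (hgb x))
  have hsqle : ∀ (a b : ℝ), |a| ≤ b → a^2 ≤ b^2 := fun a b h => by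
    have := habs_sq a b h
    rwa [abs_of_nonneg (sq_nonneg _)] at this
  have hint_rhs : IntegrableOn
      (fun x => ((g x)^2/2 + 2*(deriv f x)^2) * Real.exp (-x)) (Ioi (0:ℝ)) := by
    refine aux_int_Ioi (((hgc.pow 2).div_const 2).add (continuous_const.mul (hdc.pow 2)))
      (C := M^2/2 + 2*D^2) (fun x => ?_)
    have hnn : (0:ℝ) ≤ (g x)^2/2 + 2*(deriv f x)^2 := by positivity
    rw [abs_of_nonneg hnn]
    have h1 := hsqle _ _ (hgb x)
    have h2 := hsqle _ _ (hD x)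
    clear_value g M
    linarith [h1, h2]
  -- tendsto 0 at infinity
  have hev : ∀ᶠ x : ℝ in atTop, f x = 0 := by
    obtain ⟨R, hR⟩ := hsupp.isBounded.subset_closedBall 0
    filter_upwards [eventually_gt_atTop R] with x hx
    apply image_eq_zero_of_notMem_tsupport
    intro hmem
    have := hR hmem
    rw [Metric.mem_closedBall, Real.dist_eq, sub_zero] at this
    have : x ≤ R := (le_abs_self x).trans this
    linarith
  have htend : Tendsto (fun x => (g x)^2 * Real.exp (-x)) atTop (𝓝 0) := by
    have h1 : Tendsto (fun x : ℝ => (f 0)^2 * Real.exp (-x)) atTop (𝓝 0) := by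
      simpa using Real.tendsto_exp_neg_atTop_nhds_zero.const_mul ((f 0)^2)
    refine h1.congr' ?_
    filter_upwards [hev] with x hx
    have : g x = -f 0 := by simp [hg, hx]
    rw [this, neg_sq]
  -- FTC on (0, ∞)
  have hFTC := integral_Ioi_of_hasDerivAt_of_tendsto' (a := (0:ℝ))
      (f' := fun x => (2 * g x * deriv f x - (g x)^2) * Real.exp (-x))
      (fun x _ => hFd x) hint_main htend
  have hg0 : g 0 = 0 := by simp [hg]
  rw [hg0] at hFTC
  simp only [ne_eq, OfNat.ofNat_ne_zero, not_false_eq_true, zero_pow, zero_mul, sub_zero,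
    zero_sub, neg_zero, mul_zero] at hFTC
  -- hFTC : ∫ x in Ioi 0, (2 g g' - g²) e^{-x} = 0  (hopefully)
  have hsplit : ∫ x in Ioi (0:ℝ), (2 * g x * deriv f x - (g x)^2) * Real.exp (-x)
      = (∫ x in Ioi (0:ℝ), 2 * g x * deriv f x * Real.exp (-x))
        - ∫ x in Ioi (0:ℝ), (g x)^2 * Real.exp (-x) := by
    rw [← integral_sub hint_gg' hint_g2]
    congr 1
    funext x
    ring
  have hA : (∫ x in Ioi (0:ℝ), (g x)^2 * Real.exp (-x))
      = ∫ x in Ioi (0:ℝ), 2 * g x * deriv f x * Real.exp (-x) := by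
    have h := hFTC
    rw [hsplit] at h
    clear_value g M
    linarith
  have hmono : (∫ x in Ioi (0:ℝ), 2 * g x * deriv f x * Real.exp (-x))
      ≤ ∫ x in Ioi (0:ℝ), ((g x)^2/2 + 2*(deriv f x)^2) * Real.exp (-x) := by
    refine integral_mono hint_gg' hint_rhs (fun x => ?_)
    refine mul_le_mul_of_nonneg_right ?_ (Real.exp_pos _).le
    clear_value g M
    nlinarith [sq_nonneg (g x - 2 * deriv f x)]
  have hrhs_split : (∫ x in Ioi (0:ℝ), ((g x)^2/2 + 2*(deriv f x)^2) * Real.exp (-x))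
      = (∫ x in Ioi (0:ℝ), (g x)^2 * Real.exp (-x))/2
        + 2 * ∫ x in Ioi (0:ℝ), (deriv f x)^2 * Real.exp (-x) := by
    have heq : (fun x => ((g x)^2/2 + 2*(deriv f x)^2) * Real.exp (-x))
        = fun x => ((g x)^2 * Real.exp (-x))/2 + 2 * ((deriv f x)^2 * Real.exp (-x)) := by
      funext x; ring
    rw [heq, integral_add (hint_g2.div_const 2) (hint_f2.const_mul 2),
      integral_div, MeasureTheory.integral_const_mul]
  have : (∫ x in Ioi (0:ℝ), (g x)^2 * Real.exp (-x))
      ≤ 4 * ∫ x in Ioi (0:ℝ), (deriv f x)^2 * Real.exp (-x) := by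
    rw [hA]
    rw [hrhs_split] at hmono
    rw [← hA] at hmono ⊢
    clear_value g M
    linarith
  simpa [hg] using this

/-- the two-sided exponential (Laplace) distribution on `ℝ`, with density
`½ e^{-|x|}`, satisfies a Poincaré inequality with constant `C = 4`: for all smooth
compactly supported `f`, `Var_μ(f) ≤ 4 ∫ (f')² dμ`. -/
theorem stmt5 (μ : Measure ℝ)
    (hμ : μ = volume.withDensity (fun x => ENNReal.ofReal ((1 / 2 : ℝ) * Real.exp (-|x|)))) :
    ∀ f : ℝ → ℝ, ContDiff ℝ (⊤ : ℕ∞) f → HasCompactSupport f →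
      (∫ x, (f x) ^ 2 ∂μ) - (∫ x, f x ∂μ) ^ 2 ≤ 4 * ∫ x, (deriv f x) ^ 2 ∂μ := by
  subst hμ
  intro f hf hsupp
  set w : ℝ → ℝ := fun x => (1 / 2 : ℝ) * Real.exp (-|x|) with hwdef
  have hwc : Continuous w := continuous_const.mul (Real.continuous_exp.comp continuous_abs.neg)
  have hwpos : ∀ x, 0 ≤ w x := fun x => by positivity
  -- conversion to volume integrals
  have hconv : ∀ G : ℝ → ℝ,
      (∫ x, G x ∂(volume.withDensity fun x => ENNReal.ofReal ((1 / 2 : ℝ) * Real.exp (-|x|))))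
        = ∫ x, G x * w x := by
    intro G
    have hmeq : (fun x : ℝ => ENNReal.ofReal ((1 / 2 : ℝ) * Real.exp (-|x|)))
        = fun x => ((Real.toNNReal (w x) : NNReal) : ENNReal) := rfl
    rw [hmeq, integral_withDensity_eq_integral_smul (hwc.measurable.real_toNNReal) G]
    congr 1
    funext x
    rw [NNReal.smul_def, Real.coe_toNNReal _ (hwpos x), smul_eq_mul, mul_comm]
  rw [hconv, hconv, hconv]
  -- bounds
  obtain ⟨C, hC'⟩ := hsupp.exists_bound_of_continuous hf.continuous
  have hC : ∀ x, |f x| ≤ C := fun x => by simpa [Real.norm_eq_abs] using hC' x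
  obtain ⟨D, hD'⟩ := (hsupp.deriv).exists_bound_of_continuous (hf.continuous_deriv (by simp))
  have hD : ∀ x, |deriv f x| ≤ D := fun x => by simpa [Real.norm_eq_abs] using hD' x
  have hdc : Continuous (deriv f) := hf.continuous_deriv (by simp)
  set f0 : ℝ := f 0 with hf0
  set M : ℝ := C + |f0| with hM
  have hgb : ∀ x, |f x - f0| ≤ M := fun x => (abs_sub _ _).trans (add_le_add_left (hC x) _)
  have habs_sq : ∀ (a b : ℝ), |a| ≤ b → |a^2| ≤ b^2 := fun a b h => by
    rw [abs_pow]; exact pow_le_pow_left₀ (abs_nonneg _) h 2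
  -- integrability with weight w
  have hIw : ∀ (G : ℝ → ℝ), Continuous G → ∀ (K : ℝ), (∀ x, |G x| ≤ K) →
      Integrable (fun x => G x * w x) := by
    intro G hGc K hK
    have heq : (fun x => G x * w x) = fun x => (G x * (1/2)) * Real.exp (-|x|) := by
      funext x; rw [hwdef]; ring
    rw [heq]
    refine aux_int_w (hGc.mul continuous_const) (C := K * (1/2)) (fun x => ?_)
    rw [abs_mul]
    have : |(1:ℝ)/2| = 1/2 := by norm_num
    rw [this]
    exact mul_le_mul_of_nonneg_right (hK x) (by norm_num)
  have hint_f : Integrable (fun x => f x * w x) := hIw f hf.continuous C hC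
  have hint_f2 : Integrable (fun x => (f x)^2 * w x) :=
    hIw _ (hf.continuous.pow 2) (C^2) (fun x => habs_sq _ _ (hC x))
  have hint_g2 : Integrable (fun x => (f x - f0)^2 * w x) :=
    hIw _ ((hf.continuous.sub continuous_const).pow 2) (M^2) (fun x => habs_sq _ _ (hgb x))
  have hint_d2 : Integrable (fun x => (deriv f x)^2 * w x) :=
    hIw _ (hdc.pow 2) (D^2) (fun x => habs_sq _ _ (hD x))
  have hint_w : Integrable w := by
    have := hIw (fun _ => (1:ℝ)) continuous_const 1 (fun x => by norm_num)
    simpa using this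
  -- total mass one
  have hw1 : ∫ x, w x = 1 := by
    rw [hwdef]
    rw [MeasureTheory.integral_const_mul]
    rw [integral_comp_abs (f := fun x => Real.exp (-x))]
    rw [integral_exp_neg_Ioi_zero]
    norm_num
  -- variance bound
  have hvar : (∫ x, (f x)^2 * w x) - (∫ x, f x * w x)^2 ≤ ∫ x, (f x - f0)^2 * w x := by
    have hexp : (∫ x, (f x - f0)^2 * w x)
        = (∫ x, (f x)^2 * w x) - 2*f0*(∫ x, f x * w x) + f0^2 := by
      have heq : (fun x => (f x - f0)^2 * w x)
          = fun x => ((f x)^2 * w x) - (2*f0) * (f x * w x) + (f0^2) * (w x) := by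
        funext x; ring
      have i1 : Integrable (fun x => (f x)^2 * w x - 2*f0*(f x * w x)) volume :=
        hint_f2.sub (hint_f.const_mul (2*f0))
      have i2 : Integrable (fun x => f0^2 * w x) volume := hint_w.const_mul (f0^2)
      rw [heq, integral_add i1 i2,
        integral_sub hint_f2 (hint_f.const_mul (2*f0)), MeasureTheory.integral_const_mul, MeasureTheory.integral_const_mul,
        hw1, mul_one]
    rw [hexp]
    clear_value f0 M
    nlinarith [sq_nonneg ((∫ x, f x * w x) - f0)]
  -- split into halves
  have hsplitL : (∫ x, (f x - f0)^2 * w x)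
      = (∫ x in Iic (0:ℝ), (f x - f0)^2 * w x) + ∫ x in Ioi (0:ℝ), (f x - f0)^2 * w x :=
    (intervalIntegral.integral_Iic_add_Ioi hint_g2.integrableOn hint_g2.integrableOn).symm
  have hsplitR : (∫ x, (deriv f x)^2 * w x)
      = (∫ x in Iic (0:ℝ), (deriv f x)^2 * w x) + ∫ x in Ioi (0:ℝ), (deriv f x)^2 * w x :=
    (intervalIntegral.integral_Iic_add_Ioi hint_d2.integrableOn hint_d2.integrableOn).symm
  -- on Ioi 0, w x = (1/2) exp (-x)
  have hIoi : ∀ G : ℝ → ℝ, (∫ x in Ioi (0:ℝ), G x * w x)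
      = (1/2) * ∫ x in Ioi (0:ℝ), G x * Real.exp (-x) := by
    intro G
    rw [← MeasureTheory.integral_const_mul]
    refine setIntegral_congr_fun measurableSet_Ioi (fun x hx => ?_)
    have hx' : (0:ℝ) < x := hx
    simp only [hwdef, abs_of_pos hx']
    ring
  -- the negative half via x ↦ -x
  set fneg : ℝ → ℝ := fun x => f (-x) with hfneg
  have hfneg_cd : ContDiff ℝ (⊤ : ℕ∞) fneg := hf.comp contDiff_neg
  have hfneg_supp : HasCompactSupport fneg := hsupp.comp_homeomorph (Homeomorph.neg ℝ)
  have hIicL : (∫ x in Iic (0:ℝ), (f x - f0)^2 * w x)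
      = ∫ x in Ioi (0:ℝ), (fneg x - fneg 0)^2 * w x := by
    have := integral_comp_neg_Ioi (0:ℝ) (fun x => (f x - f0)^2 * w x)
    rw [neg_zero] at this
    rw [← this]
    refine setIntegral_congr_fun measurableSet_Ioi (fun x _ => ?_)
    simp [hwdef, hfneg, abs_neg, hf0]
  have hIicR : (∫ x in Iic (0:ℝ), (deriv f x)^2 * w x)
      = ∫ x in Ioi (0:ℝ), (deriv fneg x)^2 * w x := by
    have := integral_comp_neg_Ioi (0:ℝ) (fun x => (deriv f x)^2 * w x)
    rw [neg_zero] at this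
    rw [← this]
    refine setIntegral_congr_fun measurableSet_Ioi (fun x _ => ?_)
    have hwneg : w (-x) = w x := by simp [hwdef, abs_neg]
    have hd : deriv fneg x = -deriv f (-x) := by
      rw [hfneg]
      exact deriv_comp_neg f x
    rw [hwneg, hd, neg_sq]
  -- apply the half-line Poincaré inequality
  have key₁ := halfline f hf hsupp
  have key₂ := halfline fneg hfneg_cd hfneg_supp
  have h₁ : (∫ x in Ioi (0:ℝ), (f x - f0)^2 * w x)
      ≤ 4 * ∫ x in Ioi (0:ℝ), (deriv f x)^2 * w x := by
    rw [hIoi, hIoi, hf0]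
    clear_value fneg M
    linarith
  have h₂ : (∫ x in Ioi (0:ℝ), (fneg x - fneg 0)^2 * w x)
      ≤ 4 * ∫ x in Ioi (0:ℝ), (deriv fneg x)^2 * w x := by
    rw [hIoi, hIoi]
    clear_value fneg f0 M
    linarith
  calc (∫ x, (f x)^2 * w x) - (∫ x, f x * w x)^2
      ≤ ∫ x, (f x - f0)^2 * w x := hvar
    _ = (∫ x in Iic (0:ℝ), (f x - f0)^2 * w x) + ∫ x in Ioi (0:ℝ), (f x - f0)^2 * w x := hsplitL
    _ = (∫ x in Ioi (0:ℝ), (fneg x - fneg 0)^2 * w x)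
        + ∫ x in Ioi (0:ℝ), (f x - f0)^2 * w x := by rw [hIicL]
    _ ≤ (4 * ∫ x in Ioi (0:ℝ), (deriv fneg x)^2 * w x)
        + 4 * ∫ x in Ioi (0:ℝ), (deriv f x)^2 * w x := add_le_add h₂ h₁
    _ = 4 * ((∫ x in Iic (0:ℝ), (deriv f x)^2 * w x) + ∫ x in Ioi (0:ℝ), (deriv f x)^2 * w x) := by
        rw [hIicR]; ring
    _ = 4 * ∫ x, (deriv f x)^2 * w x := by rw [← hsplitR]
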